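/- For a prime p ≡ 2 (mod 3), the number of residue classes t mod p for which f_t(x) = x^3 - t·x^2 - (t+3)·x - 1 has three distinct roots in Z/pZ is (p-2)/3. -/

import Mathlib

section Aux

variable {p : ℕ} [Fact p.Prime]

private lemma key_no_root (hp2 : p % 3 = 2) (x : ZMod p) : x ^ 2 + x + 1 ≠ 0 := by
  intro h
  have hx3 : x ^ 3 = 1 := by linear_combination (x - 1) * h
  have hx0 : x ≠ 0 := by rintro rfl; simpa using h
  have hord : orderOf x ∣ 3 := orderOf_dvd_of_pow_eq_one hx3
  have hxp : x ^ (p - 1) = 1 := ZMod.pow_card_sub_one_eq_one hx0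
  have hord2 : orderOf x ∣ p - 1 := orderOf_dvd_of_pow_eq_one hxp
  have hnd : ¬ (3 ∣ (p - 1)) := by
    have := (Fact.out : p.Prime).two_le
    omega
  have hg : Nat.gcd 3 (p - 1) = 1 :=
    (Nat.Prime.coprime_iff_not_dvd Nat.prime_three).mpr hnd
  have : orderOf x ∣ 1 := hg ▸ Nat.dvd_gcd hord hord2
  have hx1 : x = 1 := orderOf_eq_one_iff.mp (Nat.dvd_one.mp this)
  rw [hx1] at h
  have h3 : ((3 : ℕ) : ZMod p) = 0 := by push_cast; linear_combination h
  have hdvd := (ZMod.natCast_eq_zero_iff 3 p).mp h3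
  have := ((Nat.prime_dvd_prime_iff_eq Fact.out Nat.prime_three).mp hdvd)
  omega

end Aux

/-- For a prime `p ≡ 2 (mod 3)`, exactly `(p-2)/3` residue classes `t` mod `p`
are such that `f_t(x) = x^3 - t x^2 - (t+3) x - 1` has three distinct roots in
`ℤ/pℤ`. -/
theorem count_split_mod_p_two (p : ℕ) [Fact p.Prime] (hp2 : p % 3 = 2) :
    Nat.card {t : ZMod p // ∃ a b c : ZMod p, a ≠ b ∧ a ≠ c ∧ b ≠ c ∧
      (a^3 - t*a^2 - (t+3)*a - 1 = 0) ∧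
      (b^3 - t*b^2 - (t+3)*b - 1 = 0) ∧
      (c^3 - t*c^2 - (t+3)*c - 1 = 0)} = (p - 2) / 3 := by
  classical
  set K := ZMod p
  have h10 : (1 : K) ≠ 0 := one_ne_zero
  -- basic facts about roots
  have root_ne : ∀ t a : K, a^3 - t*a^2 - (t+3)*a - 1 = 0 → a ≠ 0 ∧ a ≠ -1 := by
    intro t a h
    constructor
    · rintro rfl
      apply h10
      linear_combination -h
    · rintro rfl
      apply h10
      linear_combination h
  -- the t-value map
  set g : K → K := fun a => (a^3 - 3*a - 1) / (a^2 + a) with hg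
  have hden : ∀ a : K, a ≠ 0 → a ≠ -1 → a^2 + a ≠ 0 := by
    intro a h0 h1 h
    rcases mul_eq_zero.mp (show a * (a + 1) = 0 by linear_combination h) with h' | h'
    · exact h0 h'
    · exact h1 (by linear_combination h')
  have root_iff : ∀ t a : K, a ≠ 0 → a ≠ -1 →
      (a^3 - t*a^2 - (t+3)*a - 1 = 0 ↔ g a = t) := by
    intro t a h0 h1
    have hd := hden a h0 h1
    rw [hg]
    simp only
    rw [div_eq_iff hd]
    constructor
    · intro h; linear_combination h
    · intro h; linear_combination h
  -- sigma action
  set σ : K → K := fun a => -(1 + a)⁻¹ with hσ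
  have sigma_root : ∀ t a : K, a^3 - t*a^2 - (t+3)*a - 1 = 0 →
      (σ a)^3 - t*(σ a)^2 - (t+3)*(σ a) - 1 = 0 := by
    intro t a h
    have h1 : a ≠ -1 := (root_ne t a h).2
    have hu : (1 : K) + a ≠ 0 := by
      intro h'; exact h1 (by linear_combination h')
    rw [hσ]
    simp only
    unfold K at *
    field_simp
    linear_combination (-1) * h
  -- explicit formula for σ ∘ σ
  have hσ2 : ∀ a : K, a ≠ 0 → a ≠ -1 → σ (σ a) = -(1+a)/a := by
    intro a h0 h1
    have hu : (1 : K) + a ≠ 0 := by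
      intro h'; exact h1 (by linear_combination h')
    rw [hσ]
    simp only
    have h2 : (1 : K) + -(1+a)⁻¹ = a / (1+a) := by unfold K at *; field_simp; ring
    rw [h2, inv_div]
    ring
  -- any root of f_t is one of a, σ a, σ (σ a)
  have product : ∀ t a b : K, (a^3 - t*a^2 - (t+3)*a - 1 = 0) →
      (b^3 - t*b^2 - (t+3)*b - 1 = 0) → b = a ∨ b = σ a ∨ b = σ (σ a) := by
    intro t a b ha hb
    obtain ⟨ha0, ha1⟩ := root_ne t a ha
    have hu : (1 : K) + a ≠ 0 := by
      intro h'; exact ha1 (by linear_combination h')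
    have key : (b - a) * (b * (1+a) + 1) * (a*b + 1 + a) = 0 := by
      linear_combination (a*(1+a)) * hb - (b*(1+b)) * ha
    rcases mul_eq_zero.mp key with key' | h3
    · rcases mul_eq_zero.mp key' with h1 | h2
      · exact Or.inl (by linear_combination h1)
      · refine Or.inr (Or.inl ?_)
        rw [hσ]
        simp only
        unfold K at *
        field_simp
        linear_combination h2
    · refine Or.inr (Or.inr ?_)
      rw [hσ2 a ha0 ha1]
      unfold K at *
      field_simp
      linear_combination h3
  -- distinctness of the orbit
  have distinct : ∀ a : K, a ≠ 0 → a ≠ -1 →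
      a ≠ σ a ∧ a ≠ σ (σ a) ∧ σ a ≠ σ (σ a) := by
    intro a h0 h1
    have hu : (1 : K) + a ≠ 0 := by
      intro h'; exact h1 (by linear_combination h')
    refine ⟨?_, ?_, ?_⟩
    · intro h
      rw [hσ] at h
      simp only at h
      apply key_no_root hp2 a
      unfold K at *
      field_simp at h
      linear_combination h
    · intro h
      rw [hσ2 a h0 h1] at h
      apply key_no_root hp2 a
      unfold K at *
      field_simp at h
      linear_combination h
    · intro h
      rw [hσ2 a h0 h1, hσ] at h
      simp only at h
      apply key_no_root hp2 a
      unfold K at *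
      field_simp at h
      linear_combination h
  -- the finsets
  set s : Finset K := Finset.univ.filter (fun a => a ≠ 0 ∧ a ≠ -1) with hs
  set T : Finset K := s.image g with hT
  have fiber_card : ∀ t ∈ T, (s.filter (fun a => g a = t)).card = 3 := by
    intro t ht
    obtain ⟨a, has, hga⟩ := Finset.mem_image.mp ht
    obtain ⟨ha0, ha1⟩ := (Finset.mem_filter.mp has).2
    have haroot : a^3 - t*a^2 - (t+3)*a - 1 = 0 := (root_iff t a ha0 ha1).mpr hga
    have hbroot := sigma_root t a haroot
    have hcroot := sigma_root t (σ a) hbroot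
    obtain ⟨hb0, hb1⟩ := root_ne t (σ a) hbroot
    obtain ⟨hc0, hc1⟩ := root_ne t (σ (σ a)) hcroot
    obtain ⟨hab, hac, hbc⟩ := distinct a ha0 ha1
    have hset : s.filter (fun a => g a = t) = {a, σ a, σ (σ a)} := by
      ext x
      simp only [Finset.mem_filter, hs, Finset.mem_univ, true_and,
        Finset.mem_insert, Finset.mem_singleton]
      constructor
      · rintro ⟨⟨hx0, hx1⟩, hgx⟩
        exact product t a x haroot ((root_iff t x hx0 hx1).mpr hgx)
      · rintro (rfl | rfl | rfl)
        · exact ⟨⟨ha0, ha1⟩, hga⟩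
        · exact ⟨⟨hb0, hb1⟩, (root_iff t _ hb0 hb1).mp hbroot⟩
        · exact ⟨⟨hc0, hc1⟩, (root_iff t _ hc0 hc1).mp hcroot⟩
    rw [hset]
    rw [Finset.card_insert_of_notMem (by simp [hab, hac]),
      Finset.card_insert_of_notMem (by simp [hbc]), Finset.card_singleton]
  have hcard_s : s.card = p - 2 := by
    have h01 : (0 : K) ≠ -1 := by
      intro h; exact h10 (by linear_combination h)
    have : s = Finset.univ \ {0, -1} := by
      ext x
      simp [hs, Finset.mem_sdiff]
    rw [this, Finset.card_sdiff_of_subset (Finset.subset_univ _)]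
    rw [Finset.card_insert_of_notMem (by simpa using h01), Finset.card_singleton]
    have : Fintype.card K = p := ZMod.card p
    rw [Finset.card_univ, this]
  have hsum : s.card = 3 * T.card := by
    rw [Finset.card_eq_sum_card_fiberwise
      (fun x hx => Finset.mem_image_of_mem g hx : ∀ x ∈ s, g x ∈ T)]
    rw [Finset.sum_congr rfl fiber_card, Finset.sum_const, smul_eq_mul, mul_comm]
  -- identify the subtype with T
  have hPiff : ∀ t : K, (∃ a b c : K, a ≠ b ∧ a ≠ c ∧ b ≠ c ∧
      (a^3 - t*a^2 - (t+3)*a - 1 = 0) ∧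
      (b^3 - t*b^2 - (t+3)*b - 1 = 0) ∧
      (c^3 - t*c^2 - (t+3)*c - 1 = 0)) ↔ t ∈ T := by
    intro t
    constructor
    · rintro ⟨a, b, c, -, -, -, ha, -, -⟩
      obtain ⟨ha0, ha1⟩ := root_ne t a ha
      exact Finset.mem_image.mpr ⟨a, Finset.mem_filter.mpr
        ⟨Finset.mem_univ a, ha0, ha1⟩, (root_iff t a ha0 ha1).mp ha⟩
    · intro ht
      obtain ⟨a, has, hga⟩ := Finset.mem_image.mp ht
      obtain ⟨ha0, ha1⟩ := (Finset.mem_filter.mp has).2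
      have haroot : a^3 - t*a^2 - (t+3)*a - 1 = 0 := (root_iff t a ha0 ha1).mpr hga
      have hbroot := sigma_root t a haroot
      have hcroot := sigma_root t (σ a) hbroot
      obtain ⟨hab, hac, hbc⟩ := distinct a ha0 ha1
      exact ⟨a, σ a, σ (σ a), hab, hac, hbc, haroot, hbroot, hcroot⟩
  have hset : {t : K | ∃ a b c : K, a ≠ b ∧ a ≠ c ∧ b ≠ c ∧
      (a^3 - t*a^2 - (t+3)*a - 1 = 0) ∧
      (b^3 - t*b^2 - (t+3)*b - 1 = 0) ∧
      (c^3 - t*c^2 - (t+3)*c - 1 = 0)} = ↑T := Set.ext hPiff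
  have hfinal : Nat.card {t : K // ∃ a b c : K, a ≠ b ∧ a ≠ c ∧ b ≠ c ∧
      (a^3 - t*a^2 - (t+3)*a - 1 = 0) ∧
      (b^3 - t*b^2 - (t+3)*b - 1 = 0) ∧
      (c^3 - t*c^2 - (t+3)*c - 1 = 0)} = T.card := by
    calc Nat.card {t : K // ∃ a b c : K, a ≠ b ∧ a ≠ c ∧ b ≠ c ∧
      (a^3 - t*a^2 - (t+3)*a - 1 = 0) ∧
      (b^3 - t*b^2 - (t+3)*b - 1 = 0) ∧
      (c^3 - t*c^2 - (t+3)*c - 1 = 0)} = Set.ncard {t : K | ∃ a b c : K, a ≠ b ∧ a ≠ c ∧ b ≠ c ∧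
      (a^3 - t*a^2 - (t+3)*a - 1 = 0) ∧
      (b^3 - t*b^2 - (t+3)*b - 1 = 0) ∧
      (c^3 - t*c^2 - (t+3)*c - 1 = 0)} := rfl
    _ = Set.ncard (↑T : Set K) := by rw [hset]
    _ = T.card := Set.ncard_coe_finset T
  rw [hfinal]
  omega
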